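/- Let ∼ be an adjacency relation on Fin n, let n ≤ m, let ε > 0, and let M : Fin n → Fin m → ℝ be a channel matrix satisfying ε-differential privacy with respect to ∼. Then there exists a channel matrix M' : Fin n → Fin m → ℝ such that: (i) for every i < n, M' i i = max_{h < n} M' h i (each of the first n columns attains its maximum on the diagonal); (ii) M' i j = 0 for every i < n and every j with n ≤ j < m; (iii) M' satisfies ε-differential privacy with respect to ∼; (iv) ∑_{j < m} max_{i < n} M' i j = ∑_{j < m} max_{i < n} M i j (so, under the uniform input distribution, M' has the same a posteriori min-entropy as M). -/

import Mathlib

/-- **Step 1 of the matrix transformation.** Every `ε`-differentially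
private channel matrix with `n` rows and `m ≥ n` columns can be transformed into an
`ε`-differentially private channel matrix whose first `n` columns attain their maxima on
the diagonal, whose last `m - n` columns are identically zero, and which has the same sum
of column maxima (hence the same a posteriori min-entropy under the uniform input
distribution). -/
theorem dp_transform_diagonal {n m : ℕ} (hnm : n ≤ m)
    (Adj : Fin n → Fin n → Prop) (ε : ℝ) (hε : 0 < ε)
    (M : Fin n → Fin m → ℝ)
    (hnn : ∀ i j, 0 ≤ M i j) (hrow : ∀ i, ∑ j, M i j = 1)
    (hdp : ∀ i h, Adj i h → ∀ j, M i j ≤ Real.exp ε * M h j) :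
    ∃ M' : Fin n → Fin m → ℝ,
      (∀ i j, 0 ≤ M' i j) ∧
      (∀ i, ∑ j, M' i j = 1) ∧
      (∀ i h : Fin n, M' h (Fin.castLE hnm i) ≤ M' i (Fin.castLE hnm i)) ∧
      (∀ i : Fin n, ∀ j : Fin m, n ≤ (j : ℕ) → M' i j = 0) ∧
      (∀ i h, Adj i h → ∀ j, M' i j ≤ Real.exp ε * M' h j) ∧
      (∑ j, ⨆ i, M' i j) = (∑ j, ⨆ i, M i j) := by
  rcases Nat.eq_zero_or_pos n with hn | hn
  · subst hn
    exact ⟨M, hnn, hrow, fun i => i.elim0, fun i => i.elim0, fun i => i.elim0, rfl⟩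
  haveI : Nonempty (Fin n) := ⟨⟨0, hn⟩⟩
  -- argmax of each column
  have hex : ∀ j : Fin m, ∃ k : Fin n, ∀ i : Fin n, M i j ≤ M k j := by
    intro j
    obtain ⟨k, hk⟩ := Finite.exists_max (fun i : Fin n => M i j)
    exact ⟨k, hk⟩
  choose f hf using hex
  set g : Fin m → Fin m := fun j => Fin.castLE hnm (f j) with hg
  set M' : Fin n → Fin m → ℝ :=
    fun i j => ∑ j' ∈ Finset.univ.filter (fun j' => g j' = j), M i j' with hM'
  have hfiber : ∀ (j' : Fin m) (k : Fin n), g j' = Fin.castLE hnm k → f j' = k := by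
    intro j' k h
    exact Fin.castLE_injective hnm h
  have hnonneg : ∀ i j, 0 ≤ M' i j := fun i j =>
    Finset.sum_nonneg fun j' _ => hnn i j'
  have hrow' : ∀ i, ∑ j, M' i j = 1 := by
    intro i
    rw [hM']
    rw [Finset.sum_fiberwise_of_maps_to (fun j' _ => Finset.mem_univ (g j'))]
    exact hrow i
  have hdiag : ∀ i h : Fin n, M' h (Fin.castLE hnm i) ≤ M' i (Fin.castLE hnm i) := by
    intro i h
    apply Finset.sum_le_sum
    intro j' hj'
    have := hfiber j' i (Finset.mem_filter.mp hj').2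
    calc M h j' ≤ M (f j') j' := hf j' h
      _ = M i j' := by rw [this]
  have hzero : ∀ i : Fin n, ∀ j : Fin m, n ≤ (j : ℕ) → M' i j = 0 := by
    intro i j hj
    apply Finset.sum_eq_zero
    intro j' hj'
    exfalso
    have : g j' = j := (Finset.mem_filter.mp hj').2
    have : ((j : ℕ)) < n := by
      rw [← this]
      exact (f j').isLt
    omega
  have hdp' : ∀ i h, Adj i h → ∀ j, M' i j ≤ Real.exp ε * M' h j := by
    intro i h hadj j
    rw [hM']
    simp only
    rw [Finset.mul_sum]
    exact Finset.sum_le_sum fun j' _ => hdp i h hadj j'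
  refine ⟨M', hnonneg, hrow', hdiag, hzero, hdp', ?_⟩
  -- the sup-selection function
  classical
  set s : Fin m → Fin n := fun j => if h : (j : ℕ) < n then ⟨j, h⟩ else Classical.arbitrary _
    with hs
  have hsup' : ∀ j, (⨆ i, M' i j) = M' (s j) j := by
    intro j
    by_cases h : (j : ℕ) < n
    · have hcast : j = Fin.castLE hnm (s j) := by
        simp [hs, h, Fin.ext_iff]
      apply le_antisymm
      · apply ciSup_le
        intro i
        calc M' i j = M' i (Fin.castLE hnm (s j)) := by rw [← hcast]
          _ ≤ M' (s j) (Fin.castLE hnm (s j)) := hdiag (s j) i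
          _ = M' (s j) j := by rw [← hcast]
      · exact le_ciSup (f := fun i => M' i j) (Finite.bddAbove_range _) (s j)
    · have hz : ∀ i, M' i j = 0 := fun i => hzero i j (le_of_not_gt h)
      simp [hz]
  have hsup : ∀ j, (⨆ i, M i j) = M (f j) j := by
    intro j
    exact le_antisymm (ciSup_le fun i => hf j i) (le_ciSup (f := fun i => M i j) (Finite.bddAbove_range _) (f j))
  simp only [hsup', hsup]
  have key : ∀ j, M' (s j) j = ∑ j' ∈ Finset.univ.filter (fun j' => g j' = j), M (f j') j' := by
    intro j
    apply Finset.sum_congr rfl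
    intro j' hj'
    have hgj : g j' = j := (Finset.mem_filter.mp hj').2
    have : s j = f j' := by
      have hlt : (j : ℕ) < n := by rw [← hgj]; exact (f j').isLt
      have : j = Fin.castLE hnm (f j') := hgj.symm
      simp [hs, hlt, Fin.ext_iff, this]
    rw [this]
  calc ∑ j, M' (s j) j
      = ∑ j, ∑ j' ∈ Finset.univ.filter (fun j' => g j' = j), M (f j') j' := by
        exact Finset.sum_congr rfl fun j _ => key j
    _ = ∑ j', M (f j') j' := by
        rw [Finset.sum_fiberwise_of_maps_to (fun j' _ => Finset.mem_univ (g j'))]
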